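/- (Zero-curvature representation of Painlevé P1.) Let x : ℝ → ℝ be twice differentiable. For (t, λ) ∈ ℝ² define the 2×2 real matrices U¹(t,λ) := [[0, λ + 2x(t)], [1, 0]] and U²(t,λ) := [[−x'(t), 2λ² + 2λx(t) + t + 2x(t)²], [2(λ − x(t)), x'(t)]]. Then for all (t, λ) ∈ ℝ²: ∂_λU¹ − ∂_tU² + [U¹, U²] = (x''(t) − 6x(t)² − t) · e₁, where e₁ = [[1,0],[0,−1]]. In particular the zero-curvature condition ∂_λU¹ − ∂_tU² + [U¹, U²] = 0 holds identically if and only if x satisfies the first Painlevé equation x'' = 6x² + t. -/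

import Mathlib

open Matrix

attribute [local instance] Matrix.normedAddCommGroup Matrix.normedSpace

/-- Partial derivative in the first variable `ξ₁` of a matrix-valued map on `ℝ²`. -/
noncomputable def pd1 {n : ℕ} (f : ℝ × ℝ → Matrix (Fin n) (Fin n) ℝ) (p : ℝ × ℝ) :
    Matrix (Fin n) (Fin n) ℝ :=
  fderiv ℝ f p (1, 0)

/-- Partial derivative in the second variable `ξ₂` of a matrix-valued map on `ℝ²`. -/
noncomputable def pd2 {n : ℕ} (f : ℝ × ℝ → Matrix (Fin n) (Fin n) ℝ) (p : ℝ × ℝ) :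
    Matrix (Fin n) (Fin n) ℝ :=
  fderiv ℝ f p (0, 1)

/-- The P1 potential matrix `U¹(t,λ) = [[0, λ + 2x(t)], [1, 0]]`; the point `p = (t, λ)`. -/
noncomputable def U1P1 (x : ℝ → ℝ) (p : ℝ × ℝ) : Matrix (Fin 2) (Fin 2) ℝ :=
  !![0, p.2 + 2 * x p.1; 1, 0]

/-- The P1 potential matrix
`U²(t,λ) = [[−x'(t), 2λ² + 2λx(t) + t + 2x(t)²], [2(λ − x(t)), x'(t)]]`. -/
noncomputable def U2P1 (x : ℝ → ℝ) (p : ℝ × ℝ) : Matrix (Fin 2) (Fin 2) ℝ :=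
  !![-(deriv x p.1), 2 * p.2 ^ 2 + 2 * p.2 * x p.1 + p.1 + 2 * (x p.1) ^ 2;
     2 * (p.2 - x p.1), deriv x p.1]

/-- The basis element `e₁ = [[1, 0], [0, −1]]` of `sl(2,ℝ)`. -/
def e1 : Matrix (Fin 2) (Fin 2) ℝ := !![1, 0; 0, -1]

section Aux

open ContinuousLinearMap

/-- Entrywise computation of the fderiv of a matrix-valued function. -/
lemma fderiv_matrix_apply {f : ℝ × ℝ → Matrix (Fin 2) (Fin 2) ℝ} {p : ℝ × ℝ}
    (h : ∀ i j, DifferentiableAt ℝ (fun q => f q i j) p) (v : ℝ × ℝ) :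
    fderiv ℝ f p v = Matrix.of fun i j => fderiv ℝ (fun q => f q i j) p v := by
  have H : HasFDerivAt (F := Fin 2 → Fin 2 → ℝ) (fun q => f q)
      (ContinuousLinearMap.pi fun i => ContinuousLinearMap.pi fun j =>
        fderiv ℝ (fun q => f q i j) p) p :=
    hasFDerivAt_pi.2 fun i => hasFDerivAt_pi.2 fun j => (h i j).hasFDerivAt
  show fderiv (F := Fin 2 → Fin 2 → ℝ) ℝ (fun q => f q) p v = _
  rw [H.fderiv]
  rfl

variable {x : ℝ → ℝ} {p : ℝ × ℝ}

/- entry functions of U1P1 -/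
lemma U1e00 : (fun q : ℝ × ℝ => U1P1 x q 0 0) = fun _ => (0:ℝ) := by funext q; simp [U1P1]
lemma U1e01 : (fun q : ℝ × ℝ => U1P1 x q 0 1) = fun q => q.2 + 2 * x q.1 := by
  funext q; simp [U1P1]
lemma U1e10 : (fun q : ℝ × ℝ => U1P1 x q 1 0) = fun _ => (1:ℝ) := by funext q; simp [U1P1]
lemma U1e11 : (fun q : ℝ × ℝ => U1P1 x q 1 1) = fun _ => (0:ℝ) := by funext q; simp [U1P1]

/- entry functions of U2P1 -/
lemma U2e00 : (fun q : ℝ × ℝ => U2P1 x q 0 0) = fun q => -(deriv x q.1) := by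
  funext q; simp [U2P1]
lemma U2e01 : (fun q : ℝ × ℝ => U2P1 x q 0 1)
    = fun q => 2 * q.2 ^ 2 + 2 * q.2 * x q.1 + q.1 + 2 * (x q.1) ^ 2 := by
  funext q; simp [U2P1]
lemma U2e10 : (fun q : ℝ × ℝ => U2P1 x q 1 0) = fun q => 2 * (q.2 - x q.1) := by
  funext q; simp [U2P1]
lemma U2e11 : (fun q : ℝ × ℝ => U2P1 x q 1 1) = fun q => deriv x q.1 := by
  funext q; simp [U2P1]

lemma hXf (hx : Differentiable ℝ x) :
    HasFDerivAt (fun q : ℝ × ℝ => x q.1) ((deriv x p.1) • fst ℝ ℝ ℝ) p :=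
  ((hx p.1).hasDerivAt).comp_hasFDerivAt p hasFDerivAt_fst

lemma hA (hx : Differentiable ℝ x) :
    HasFDerivAt (fun q : ℝ × ℝ => q.2 + 2 * x q.1)
      (snd ℝ ℝ ℝ + (2 : ℝ) • ((deriv x p.1) • fst ℝ ℝ ℝ)) p :=
  hasFDerivAt_snd.add ((hXf hx).const_mul 2)

lemma hB (hx' : Differentiable ℝ (deriv x)) :
    HasFDerivAt (fun q : ℝ × ℝ => -(deriv x q.1))
      (-((deriv (deriv x) p.1) • fst ℝ ℝ ℝ)) p :=
  (hXf hx').neg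

lemma hE (hx' : Differentiable ℝ (deriv x)) :
    HasFDerivAt (fun q : ℝ × ℝ => deriv x q.1)
      ((deriv (deriv x) p.1) • fst ℝ ℝ ℝ) p :=
  hXf hx'

lemma hD (hx : Differentiable ℝ x) :
    HasFDerivAt (fun q : ℝ × ℝ => 2 * (q.2 - x q.1))
      ((2 : ℝ) • (snd ℝ ℝ ℝ - (deriv x p.1) • fst ℝ ℝ ℝ)) p :=
  (hasFDerivAt_snd.sub (hXf hx)).const_mul 2

lemma hC (hx : Differentiable ℝ x) (v : ℝ × ℝ) :
    fderiv ℝ (fun q : ℝ × ℝ =>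
      2 * q.2 ^ 2 + 2 * q.2 * x q.1 + q.1 + 2 * (x q.1) ^ 2) p v
      = 2 * (2 * p.2) * v.2 + (2 * v.2 * x p.1 + 2 * p.2 * (deriv x p.1 * v.1))
        + v.1 + 2 * (2 * x p.1) * (deriv x p.1 * v.1) := by
  simp only [pow_two]
  have h : HasFDerivAt (fun q : ℝ × ℝ =>
      2 * (q.2 * q.2) + 2 * q.2 * x q.1 + q.1 + 2 * (x q.1 * x q.1)) _ p :=
    ((((hasFDerivAt_snd.mul hasFDerivAt_snd).const_mul 2).add
      ((hasFDerivAt_snd.const_mul 2).mul (hXf hx))).add hasFDerivAt_fst).add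
      (((hXf hx).mul (hXf hx)).const_mul 2)
  rw [h.fderiv]
  simp
  ring

lemma hCdiff (hx : Differentiable ℝ x) :
    DifferentiableAt ℝ (fun q : ℝ × ℝ =>
      2 * q.2 ^ 2 + 2 * q.2 * x q.1 + q.1 + 2 * (x q.1) ^ 2) p := by
  fun_prop

lemma U1diff (hx : Differentiable ℝ x) (i j : Fin 2) :
    DifferentiableAt ℝ (fun q => U1P1 x q i j) p := by
  fin_cases i <;> fin_cases j <;>
    simp only [Fin.zero_eta, Fin.mk_one] <;>
    [rw [U1e00]; rw [U1e01]; rw [U1e10]; rw [U1e11]] <;>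
    first
      | exact differentiableAt_const _
      | exact (hA hx).differentiableAt

lemma U2diff (hx : Differentiable ℝ x) (hx' : Differentiable ℝ (deriv x)) (i j : Fin 2) :
    DifferentiableAt ℝ (fun q => U2P1 x q i j) p := by
  fin_cases i <;> fin_cases j <;>
    simp only [Fin.zero_eta, Fin.mk_one] <;>
    [rw [U2e00]; rw [U2e01]; rw [U2e10]; rw [U2e11]]
  · exact (hB hx').differentiableAt
  · exact hCdiff hx
  · exact (hD hx).differentiableAt
  · exact (hE hx').differentiableAt

lemma pd2U1 (hx : Differentiable ℝ x) :
    pd2 (U1P1 x) p = !![0, 1; 0, 0] := by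
  unfold pd2
  rw [fderiv_matrix_apply (U1diff hx)]
  ext i j
  fin_cases i <;> fin_cases j <;>
    simp only [Fin.zero_eta, Fin.mk_one, Matrix.of_apply, Matrix.cons_val',
      Matrix.cons_val_zero, Matrix.cons_val_one, Matrix.head_cons,
      Matrix.empty_val', Matrix.cons_val_fin_one, Matrix.head_fin_const] <;>
    [rw [U1e00]; rw [U1e01]; rw [U1e10]; rw [U1e11]]
  · simp
  · rw [(hA hx).fderiv]; simp
  · simp
  · simp

lemma pd1U2 (hx : Differentiable ℝ x) (hx' : Differentiable ℝ (deriv x)) :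
    pd1 (U2P1 x) p = !![-(deriv (deriv x) p.1),
        2 * p.2 * deriv x p.1 + 1 + 4 * x p.1 * deriv x p.1;
        -(2 * deriv x p.1), deriv (deriv x) p.1] := by
  unfold pd1
  rw [fderiv_matrix_apply (U2diff hx hx')]
  ext i j
  fin_cases i <;> fin_cases j <;>
    simp only [Fin.zero_eta, Fin.mk_one, Matrix.of_apply, Matrix.cons_val',
      Matrix.cons_val_zero, Matrix.cons_val_one, Matrix.head_cons,
      Matrix.empty_val', Matrix.cons_val_fin_one, Matrix.head_fin_const] <;>
    [rw [U2e00]; rw [U2e01]; rw [U2e10]; rw [U2e11]]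
  · rw [(hB hx').fderiv]; simp
  · rw [hC hx]; ring
  · rw [(hD hx).fderiv]; simp
  · rw [(hE hx').fderiv]; simp

lemma key (hx : Differentiable ℝ x) (hx' : Differentiable ℝ (deriv x)) (p : ℝ × ℝ) :
    pd2 (U1P1 x) p - pd1 (U2P1 x) p
      + (U1P1 x p * U2P1 x p - U2P1 x p * U1P1 x p)
      = (deriv (deriv x) p.1 - 6 * (x p.1) ^ 2 - p.1) • e1 := by
  rw [pd2U1 hx, pd1U2 hx hx']
  ext i j
  fin_cases i <;> fin_cases j <;>
    simp [U1P1, U2P1, e1, Matrix.mul_apply, Fin.sum_univ_two, smul_eq_mul] <;> ring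

end Aux

/-- zero-curvature representation of Painlevé P1: for twice differentiable
`x`, `∂_λU¹ − ∂_tU² + [U¹, U²] = (x'' − 6x² − t)·e₁`, and the zero-curvature condition holds
identically iff `x` satisfies the first Painlevé equation `x'' = 6x² + t`.
Here `t` is the first variable and `λ` the second, so `∂_t = pd1` and `∂_λ = pd2`. -/
theorem zcr_painleve_one (x : ℝ → ℝ)
    (hx : Differentiable ℝ x) (hx' : Differentiable ℝ (deriv x)) :
    (∀ p : ℝ × ℝ,
      pd2 (U1P1 x) p - pd1 (U2P1 x) p
        + (U1P1 x p * U2P1 x p - U2P1 x p * U1P1 x p)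
        = (deriv (deriv x) p.1 - 6 * (x p.1) ^ 2 - p.1) • e1) ∧
    ((∀ p : ℝ × ℝ,
      pd2 (U1P1 x) p - pd1 (U2P1 x) p
        + (U1P1 x p * U2P1 x p - U2P1 x p * U1P1 x p) = 0) ↔
      ∀ t : ℝ, deriv (deriv x) t = 6 * (x t) ^ 2 + t) := by
  refine ⟨key hx hx', ?_⟩
  constructor
  · intro h t
    have h0 := h (t, 0)
    rw [key hx hx' (t, 0)] at h0
    have h00 := congrFun (congrFun h0 0) 0
    simp [e1, Matrix.smul_apply] at h00
    linarith
  · intro h p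
    rw [key hx hx' p]
    have hz : deriv (deriv x) p.1 - 6 * (x p.1) ^ 2 - p.1 = 0 := by
      have := h p.1; linarith
    rw [hz, zero_smul]
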